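/- Let r^1,...,r^k ∈ Z^n be linearly independent with L = span{r^1,...,r^k}, and suppose (r^i)* − (r^j)* ∈ (L ∩ Z^n)* for some i ≠ j. Then ICR(pos{r^1,...,r^k}) ≤ max{ ICR(pos{r^1,...,r^k}|(r^i)^⊥), ICR(pos{r^1,...,r^k}|(r^j)^⊥) } + 1, where the projected integer Carathéodory ranks are taken with respect to the projected lattices (L ∩ Z^n)|(r^i)^⊥ and (L ∩ Z^n)|(r^j)^⊥. -/

import Mathlib

open scoped BigOperators

noncomputable section

namespace ICRPaper

/-- A real vector is integral if every coordinate is an integer. -/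
def IsIntegral {n : ℕ} (x : Fin n → ℝ) : Prop := ∀ i, ∃ z : ℤ, x i = (z : ℝ)

/-- The lattice of integer points of `ℝ^n`. -/
def intLattice (n : ℕ) : Set (Fin n → ℝ) := {x | IsIntegral x}

/-- Standard dot product on `ℝ^n`. -/
def dot {n : ℕ} (x y : Fin n → ℝ) : ℝ := ∑ i, x i * y i

/-- `pos r`: the cone of non-negative real combinations of the vectors `r i`. -/
def pos {n : ℕ} {ι : Type} [Fintype ι] (r : ι → (Fin n → ℝ)) : Set (Fin n → ℝ) :=
  {x | ∃ lam : ι → ℝ, (∀ i, 0 ≤ lam i) ∧ x = ∑ i, lam i • r i}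

/-- Lattice points (w.r.t. a lattice `Λ`) in the half-open parallelepiped spanned by `r`. -/
def parL {n : ℕ} {ι : Type} [Fintype ι] (Λ : Set (Fin n → ℝ)) (r : ι → (Fin n → ℝ)) :
    Set (Fin n → ℝ) :=
  {x | (∃ lam : ι → ℝ, (∀ i, 0 ≤ lam i ∧ lam i < 1) ∧ x = ∑ i, lam i • r i) ∧ x ∈ Λ}

/-- Integer points in the half-open parallelepiped spanned by `r`. -/
def par {n : ℕ} {ι : Type} [Fintype ι] (r : ι → (Fin n → ℝ)) : Set (Fin n → ℝ) :=
  parL (intLattice n) r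

/-- `h` is a Hilbert basis element of the cone `C` with respect to the lattice `Λ`:
a nonzero lattice vector of `C` which is not the sum of two nonzero lattice vectors of `C`. -/
def IsHilbertL {n : ℕ} (Λ : Set (Fin n → ℝ)) (C : Set (Fin n → ℝ)) (h : Fin n → ℝ) : Prop :=
  h ∈ C ∧ h ∈ Λ ∧ h ≠ 0 ∧
    ∀ a b : Fin n → ℝ, a ∈ C → b ∈ C → a ∈ Λ → b ∈ Λ → a ≠ 0 → b ≠ 0 → h ≠ a + b

/-- The integer Carathéodory rank of `C` with respect to the lattice `Λ`:
the maximum over lattice points `z ∈ C` of the minimal number of Hilbert basis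
elements needed to write `z` as a non-negative integral combination. -/
def ICRL {n : ℕ} (Λ : Set (Fin n → ℝ)) (C : Set (Fin n → ℝ)) : ℕ :=
  sSup {m : ℕ | ∃ z ∈ C, z ∈ Λ ∧
    m = sInf {k : ℕ | ∃ h : Fin k → (Fin n → ℝ), ∃ c : Fin k → ℕ,
      (∀ i, IsHilbertL Λ C (h i)) ∧ z = ∑ i, (c i : ℝ) • h i}}

/-- The integer Carathéodory rank with respect to the integer lattice `ℤ^n`. -/
def ICR {n : ℕ} (C : Set (Fin n → ℝ)) : ℕ := ICRL (intLattice n) C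

/-- The lattice `L ∩ ℤ^n`, where `L` is the real span of the vectors `r i`. -/
def latticeOf {n : ℕ} {ι : Type} [Fintype ι] (r : ι → (Fin n → ℝ)) : Set (Fin n → ℝ) :=
  {x | x ∈ Submodule.span ℝ (Set.range r) ∧ IsIntegral x}

/-- The dual lattice `Λ* = {x ∈ lin Λ : ⟨y, x⟩ ∈ ℤ for all y ∈ Λ}`. -/
def dualLattice {n : ℕ} (Λ : Set (Fin n → ℝ)) : Set (Fin n → ℝ) :=
  {x | x ∈ Submodule.span ℝ Λ ∧ ∀ y ∈ Λ, ∃ m : ℤ, dot y x = (m : ℝ)}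

/-- Orthogonal projection onto the orthogonal complement of `v`. -/
def projPerp {n : ℕ} (v : Fin n → ℝ) (x : Fin n → ℝ) : Fin n → ℝ :=
  x - (dot x v / dot v v) • v

/-! ### dot algebra -/

variable {n : ℕ}

lemma dot_comm (x y : Fin n → ℝ) : dot x y = dot y x := by simp [dot, mul_comm]

lemma dot_add_left (x y z : Fin n → ℝ) : dot (x + y) z = dot x z + dot y z := by
  simp [dot, add_mul, Finset.sum_add_distrib]

lemma dot_sub_left (x y z : Fin n → ℝ) : dot (x - y) z = dot x z - dot y z := by
  simp [dot, sub_mul, Finset.sum_sub_distrib]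

lemma dot_smul_left (s : ℝ) (x y : Fin n → ℝ) : dot (s • x) y = s * dot x y := by
  simp [dot, Finset.mul_sum, mul_assoc]

lemma dot_zero_left (y : Fin n → ℝ) : dot 0 y = 0 := by simp [dot]

lemma dot_zero_right (x : Fin n → ℝ) : dot x 0 = 0 := by simp [dot]

lemma dot_add_right (x y z : Fin n → ℝ) : dot x (y + z) = dot x y + dot x z := by
  rw [dot_comm, dot_add_left, dot_comm y x, dot_comm z x]

lemma dot_sub_right (x y z : Fin n → ℝ) : dot x (y - z) = dot x y - dot x z := by
  rw [dot_comm, dot_sub_left, dot_comm y x, dot_comm z x]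

lemma dot_smul_right (s : ℝ) (x y : Fin n → ℝ) : dot x (s • y) = s * dot x y := by
  rw [dot_comm, dot_smul_left, dot_comm y x]

lemma dot_sum_left {ι : Type*} (s : Finset ι) (f : ι → (Fin n → ℝ)) (y : Fin n → ℝ) :
    dot (∑ t ∈ s, f t) y = ∑ t ∈ s, dot (f t) y := by
  classical
  induction s using Finset.induction_on with
  | empty => simp [dot_zero_left]
  | @insert a s' hx ih => rw [Finset.sum_insert hx, dot_add_left, ih, Finset.sum_insert hx]

lemma dot_self_pos {x : Fin n → ℝ} (hx : x ≠ 0) : 0 < dot x x := by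
  have h1 : ∃ a, x a ≠ 0 := by
    by_contra h; push_neg at h; exact hx (funext fun a => h a)
  obtain ⟨a, ha⟩ := h1
  refine Finset.sum_pos' (fun i _ => mul_self_nonneg _) ⟨a, Finset.mem_univ a, ?_⟩
  exact mul_self_pos.mpr ha

lemma dot_self_ne {x : Fin n → ℝ} (hx : x ≠ 0) : dot x x ≠ 0 := ne_of_gt (dot_self_pos hx)

/-! ### projPerp algebra -/

lemma proj_zero (v : Fin n → ℝ) : projPerp v 0 = 0 := by
  simp [projPerp, dot_zero_left]

lemma proj_add (v x y : Fin n → ℝ) : projPerp v (x + y) = projPerp v x + projPerp v y := by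
  simp only [projPerp, dot_add_left, add_div, add_smul]
  abel

lemma proj_sub (v x y : Fin n → ℝ) : projPerp v (x - y) = projPerp v x - projPerp v y := by
  simp only [projPerp, dot_sub_left, sub_div, sub_smul]
  abel

lemma proj_smul (v : Fin n → ℝ) (s : ℝ) (x : Fin n → ℝ) :
    projPerp v (s • x) = s • projPerp v x := by
  simp only [projPerp, dot_smul_left, smul_sub, smul_smul, mul_div_assoc]

lemma proj_sum (v : Fin n → ℝ) {ι : Type*} (s : Finset ι) (f : ι → (Fin n → ℝ)) :
    projPerp v (∑ t ∈ s, f t) = ∑ t ∈ s, projPerp v (f t) := by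
  classical
  induction s using Finset.induction_on with
  | empty => simp [proj_zero]
  | @insert a s' hx ih => rw [Finset.sum_insert hx, proj_add, ih, Finset.sum_insert hx]

lemma proj_self {v : Fin n → ℝ} (hv : v ≠ 0) : projPerp v v = 0 := by
  simp [projPerp, div_self (dot_self_ne hv)]

lemma dot_proj_left (v x w : Fin n → ℝ) :
    dot (projPerp v x) w = dot x w - (dot x v / dot v v) * dot v w := by
  rw [projPerp, dot_sub_left, dot_smul_left]

lemma proj_eq_zero_iff (v x : Fin n → ℝ) :
    projPerp v x = 0 ↔ x = (dot x v / dot v v) • v := by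
  rw [projPerp, sub_eq_zero]

/-! ### integrality -/

lemma IsIntegral.add {x y : Fin n → ℝ} (hx : IsIntegral x) (hy : IsIntegral y) :
    IsIntegral (x + y) := by
  intro a; obtain ⟨z1, h1⟩ := hx a; obtain ⟨z2, h2⟩ := hy a
  exact ⟨z1 + z2, by simp [h1, h2]⟩

lemma IsIntegral.sub {x y : Fin n → ℝ} (hx : IsIntegral x) (hy : IsIntegral y) :
    IsIntegral (x - y) := by
  intro a; obtain ⟨z1, h1⟩ := hx a; obtain ⟨z2, h2⟩ := hy a
  exact ⟨z1 - z2, by simp [h1, h2]⟩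

lemma IsIntegral.zero : IsIntegral (0 : Fin n → ℝ) := fun _ => ⟨0, by simp⟩

lemma IsIntegral.zsmul {x : Fin n → ℝ} (hx : IsIntegral x) (m : ℤ) :
    IsIntegral ((m : ℝ) • x) := by
  intro a; obtain ⟨z1, h1⟩ := hx a
  exact ⟨m * z1, by simp [h1]⟩

lemma IsIntegral.nsmul {x : Fin n → ℝ} (hx : IsIntegral x) (m : ℕ) :
    IsIntegral ((m : ℝ) • x) := by
  have := hx.zsmul (m : ℤ); simpa using this

lemma IsIntegral.sum {ι : Type*} (s : Finset ι) (f : ι → (Fin n → ℝ))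
    (h : ∀ t ∈ s, IsIntegral (f t)) : IsIntegral (∑ t ∈ s, f t) := by
  classical
  induction s using Finset.induction_on with
  | empty => simpa using (IsIntegral.zero (n := n))
  | @insert a s' hx ih =>
      rw [Finset.sum_insert hx]
      exact (h a (Finset.mem_insert_self a s')).add
        (ih fun t ht => h t (Finset.mem_insert_of_mem ht))

/-! ### coordinates -/

section Coords

variable {k : ℕ} {r : Fin k → (Fin n → ℝ)} {rstar : Fin k → (Fin n → ℝ)}
variable (hdual : ∀ l j, dot (r l) (rstar j) = if l = j then 1 else 0)

include hdual

lemma coords_eq (c : Fin k → ℝ) (t : Fin k) :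
    dot (∑ l, c l • r l) (rstar t) = c t := by
  rw [dot_sum_left]
  have : ∀ l, dot (c l • r l) (rstar t) = if l = t then c l else 0 := by
    intro l; rw [dot_smul_left, hdual l t]
    by_cases h : l = t <;> simp [h]
  rw [Finset.sum_congr rfl (fun l _ => this l), Finset.sum_ite_eq' Finset.univ t]
  simp

lemma rep_of_mem_span {x : Fin n → ℝ} (hx : x ∈ Submodule.span ℝ (Set.range r)) :
    x = ∑ l, dot x (rstar l) • r l := by
  obtain ⟨c, hc⟩ := (Submodule.mem_span_range_iff_exists_fun ℝ).mp hx
  rw [← hc]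
  refine Finset.sum_congr rfl fun l _ => ?_
  rw [coords_eq hdual]

lemma mem_pos_iff {x : Fin n → ℝ} :
    x ∈ pos r ↔ x ∈ Submodule.span ℝ (Set.range r) ∧ ∀ l, 0 ≤ dot x (rstar l) := by
  constructor
  · rintro ⟨c, hc0, rfl⟩
    constructor
    · exact Submodule.sum_mem _ fun l _ =>
        Submodule.smul_mem _ _ (Submodule.subset_span (Set.mem_range_self l))
    · intro l; rw [coords_eq hdual]; exact hc0 l
  · rintro ⟨hsp, hnn⟩
    exact ⟨fun l => dot x (rstar l), hnn, rep_of_mem_span hdual hsp⟩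

omit hdual in
lemma pos_subset_span : pos r ⊆ (Submodule.span ℝ (Set.range r) : Set (Fin n → ℝ)) := by
  rintro x ⟨c, hc0, rfl⟩
  exact Submodule.sum_mem _ fun l _ =>
    Submodule.smul_mem _ _ (Submodule.subset_span (Set.mem_range_self l))

end Coords

/-! ### generator of the lattice on the ray ℝ v -/

lemma exists_gen {v : Fin n → ℝ} (hv : v ≠ 0) (hvint : IsIntegral v) :
    ∃ c : ℝ, 0 < c ∧ c ≤ 1 ∧
      ∀ t : ℝ, IsIntegral (t • v) ↔ ∃ z : ℤ, t = (z : ℝ) * c := by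
  classical
  have h1 : ∃ a, v a ≠ 0 := by
    by_contra h; push_neg at h; exact hv (funext fun a => h a)
  obtain ⟨a, ha⟩ := h1
  obtain ⟨m, hm⟩ := hvint a
  have hmne : (m : ℝ) ≠ 0 := by rw [← hm]; exact ha
  have hmz : m ≠ 0 := by exact_mod_cast hmne
  -- subgroup of ℤ
  set K : AddSubgroup ℤ :=
    { carrier := {z : ℤ | IsIntegral (((z : ℝ) / (m : ℝ)) • v)}
      add_mem' := by
        intro z w hz hw
        have := IsIntegral.add hz hw
        simpa [add_div, add_smul] using this
      zero_mem' := by simpa using (IsIntegral.zero (n := n))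
      neg_mem' := by
        intro z hz
        have := IsIntegral.sub (IsIntegral.zero (n := n)) hz
        simpa [neg_div, neg_smul] using this } with hK
  obtain ⟨g, hg⟩ := Int.subgroup_cyclic K
  have hmem_iff : ∀ z : ℤ, z ∈ K ↔ ∃ w : ℤ, z = w * g := by
    intro z
    rw [hg, AddSubgroup.mem_closure_singleton]
    constructor
    · rintro ⟨w, rfl⟩; exact ⟨w, by rw [smul_eq_mul, mul_comm]⟩
    · rintro ⟨w, rfl⟩; exact ⟨w, by rw [smul_eq_mul, mul_comm]⟩
  have hmK : m ∈ K := by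
    show IsIntegral (((m : ℝ) / (m : ℝ)) • v)
    rw [div_self hmne]; simpa using hvint
  have hgne : g ≠ 0 := by
    rintro rfl
    obtain ⟨w, hw⟩ := (hmem_iff m).mp hmK
    simp at hw; exact hmz hw
  -- WLOG sign: use |g| ... instead handle by cases; define c
  refine ⟨|(g : ℝ) / (m : ℝ)|, ?_, ?_, ?_⟩
  · apply abs_pos.mpr
    apply div_ne_zero _ hmne
    exact_mod_cast hgne
  · -- from hmK: m = w * g, so |g| ≤ |m|, |g/m| ≤ 1
    obtain ⟨w, hw⟩ := (hmem_iff m).mp hmK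
    have hwne : w ≠ 0 := by rintro rfl; simp at hw; exact hmz hw
    rw [abs_div, div_le_one (by positivity)]
    have h1 : |(m : ℝ)| = |(w : ℝ)| * |(g : ℝ)| := by
      rw [← abs_mul]
      congr 1
      exact_mod_cast hw
    have h2 : (1 : ℝ) ≤ |(w : ℝ)| := by
      rw [← Int.cast_abs]
      exact_mod_cast Int.one_le_abs hwne
    nlinarith [abs_nonneg ((g : ℝ)), abs_nonneg ((w : ℝ))]
  · intro t
    constructor
    · intro hint
      obtain ⟨w, hw⟩ := hint a
      have htm : t * (m : ℝ) = (w : ℝ) := by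
        have h := hw
        simp only [Pi.smul_apply, smul_eq_mul] at h
        rw [hm] at h
        exact h
      have hwK : w ∈ K := by
        show IsIntegral (((w : ℝ) / (m : ℝ)) • v)
        rw [← htm, mul_div_assoc, div_self hmne, mul_one]
        exact hint
      obtain ⟨u, hu⟩ := (hmem_iff w).mp hwK
      have ht : t = (w : ℝ) / (m : ℝ) := by rw [eq_div_iff hmne]; exact htm
      have hwr : (w : ℝ) = (u : ℝ) * (g : ℝ) := by exact_mod_cast hu
      rcases abs_cases ((g : ℝ) / (m : ℝ)) with ⟨he, _⟩ | ⟨he, _⟩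
      · exact ⟨u, by rw [ht, hwr, he]; ring⟩
      · exact ⟨-u, by rw [ht, hwr, he]; push_cast; ring⟩
    · rintro ⟨z, rfl⟩
      rcases abs_cases ((g : ℝ) / (m : ℝ)) with ⟨he, _⟩ | ⟨he, _⟩
      · have h2 : IsIntegral ((((z * g : ℤ) : ℝ) / (m : ℝ)) • v) :=
          (hmem_iff (z * g)).mpr ⟨z, rfl⟩
        rw [he]
        convert h2 using 2
        push_cast
        ring
      · have h2 : IsIntegral (((((-z) * g : ℤ) : ℝ) / (m : ℝ)) • v) :=
          (hmem_iff ((-z) * g)).mpr ⟨-z, rfl⟩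
        rw [he]
        convert h2 using 2
        push_cast
        ring

/-! ### main development -/

section Main

variable {k : ℕ} {r : Fin k → (Fin n → ℝ)} {rstar : Fin k → (Fin n → ℝ)}
variable (hint : ∀ l, IsIntegral (r l)) (hli : LinearIndependent ℝ r)
variable (hdual : ∀ l j, dot (r l) (rstar j) = if l = j then 1 else 0)
variable (i : Fin k)

include hdual

omit hdual in
include hli in
lemma r_ne_zero : r i ≠ 0 := hli.ne_zero i

lemma lam_proj (x : Fin n → ℝ) {l : Fin k} (hl : l ≠ i) :
    dot (projPerp (r i) x) (rstar l) = dot x (rstar l) := by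
  rw [dot_proj_left, hdual i l, if_neg (Ne.symm hl), mul_zero, sub_zero]

include hli in
lemma proj_rep {x : Fin n → ℝ} (hx : x ∈ Submodule.span ℝ (Set.range r)) :
    projPerp (r i) x =
      ∑ l ∈ Finset.univ.erase i, dot (projPerp (r i) x) (rstar l) • projPerp (r i) (r l) := by
  classical
  conv_lhs => rw [rep_of_mem_span hdual hx]
  rw [proj_sum]
  rw [← Finset.add_sum_erase _ _ (Finset.mem_univ i)]
  rw [proj_smul, proj_self (r_ne_zero hli i), smul_zero, zero_add]
  refine Finset.sum_congr rfl fun l hl => ?_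
  have hl' : l ≠ i := (Finset.mem_erase.mp hl).1
  rw [proj_smul, lam_proj hdual i x hl']

lemma projpos_coords_nonneg {y : Fin n → ℝ} (hy : y ∈ projPerp (r i) '' pos r)
    {l : Fin k} (hl : l ≠ i) : 0 ≤ dot y (rstar l) := by
  obtain ⟨x, hx, rfl⟩ := hy
  rw [lam_proj hdual i x hl]
  exact ((mem_pos_iff hdual).mp hx).2 l

include hli in
lemma projpos_eq_zero {y : Fin n → ℝ} (hy : y ∈ projPerp (r i) '' pos r)
    (h0 : ∀ l, l ≠ i → dot y (rstar l) = 0) : y = 0 := by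
  obtain ⟨x, hx, rfl⟩ := hy
  rw [proj_rep hli hdual i (pos_subset_span hx)]
  refine Finset.sum_eq_zero fun l hl => ?_
  rw [h0 l (Finset.mem_erase.mp hl).1, zero_smul]

include hli in
lemma mem_projpos_of {u : Fin n → ℝ} (hu : u ∈ Submodule.span ℝ (Set.range r))
    (hnn : ∀ l, l ≠ i → 0 ≤ dot (projPerp (r i) u) (rstar l)) :
    projPerp (r i) u ∈ projPerp (r i) '' pos r := by
  classical
  set x : Fin n → ℝ :=
    ∑ l, (if l = i then 0 else dot (projPerp (r i) u) (rstar l)) • r l with hxdef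
  have hxpos : x ∈ pos r := by
    refine ⟨fun l => if l = i then 0 else dot (projPerp (r i) u) (rstar l), fun l => ?_, rfl⟩
    by_cases h : l = i
    · simp [h]
    · simp only [if_neg h]; exact hnn l h
  refine ⟨x, hxpos, ?_⟩
  have hxspan : x ∈ Submodule.span ℝ (Set.range r) := pos_subset_span hxpos
  rw [proj_rep hli hdual i hxspan, proj_rep hli hdual i hu]
  refine Finset.sum_congr rfl fun l hl => ?_
  have hl' : l ≠ i := (Finset.mem_erase.mp hl).1
  rw [lam_proj hdual i x hl', hxdef, coords_eq hdual, if_neg hl']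

omit hdual in
lemma fsum_add (a b : Fin n → ℝ) :
    ∑ l ∈ Finset.univ.erase i, dot (a + b) (rstar l)
      = (∑ l ∈ Finset.univ.erase i, dot a (rstar l))
        + ∑ l ∈ Finset.univ.erase i, dot b (rstar l) := by
  rw [← Finset.sum_add_distrib]
  exact Finset.sum_congr rfl fun l _ => dot_add_left a b (rstar l)

include hli hint in
lemma finite_bdd (M : ℝ) :
    {y | y ∈ projPerp (r i) '' latticeOf r ∧ y ∈ projPerp (r i) '' pos r ∧
      ∑ l ∈ Finset.univ.erase i, dot y (rstar l) ≤ M}.Finite := by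
  classical
  obtain ⟨c, hc0, hc1, hgen⟩ := exists_gen (r_ne_zero hli i) (hint i)
  set B : Fin n → ℝ := fun a => (max M 1) * ∑ l, |r l a| with hB
  have hWfin : (Set.univ.pi (fun a : Fin n => (Set.Icc (-⌈B a⌉) (⌈B a⌉) : Set ℤ))).Finite :=
    Set.Finite.pi fun a => Set.finite_Icc _ _
  have hUfin : {u : Fin n → ℝ | IsIntegral u ∧ ∀ a, |u a| ≤ B a}.Finite := by
    have himg := hWfin.image (fun w : Fin n → ℤ => fun a => ((w a : ℝ)))
    refine himg.subset ?_
    rintro u ⟨hui, hub⟩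
    have hui' : ∀ a, ∃ z : ℤ, u a = (z : ℝ) := hui
    choose w hw using hui'
    refine (Set.mem_image _ _ _).mpr ⟨w, fun a _ => ?_, ?_⟩
    · have h1 : |(w a : ℝ)| ≤ B a := by rw [← hw a]; exact hub a
      have h2 : ((|w a| : ℤ) : ℝ) ≤ (⌈B a⌉ : ℝ) := by
        rw [Int.cast_abs]; exact le_trans h1 (Int.le_ceil _)
      have h3 : |w a| ≤ ⌈B a⌉ := by exact_mod_cast h2
      simpa [Set.mem_Icc] using abs_le.mp h3
    · funext a; exact (hw a).symm
  refine (hUfin.image (projPerp (r i))).subset ?_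
  rintro y ⟨hyL, hyC, hyf⟩
  obtain ⟨u₀, hu₀, hu₀y⟩ := hyL
  set β : ℝ := dot u₀ (rstar i) with hβ
  set t : ℝ := (⌊β / c⌋ : ℝ) * c with ht
  set u : Fin n → ℝ := u₀ - t • r i with hu
  have htint : IsIntegral (t • r i) := (hgen t).mpr ⟨⌊β / c⌋, rfl⟩
  have huint : IsIntegral u := hu₀.2.sub htint
  have huspan : u ∈ Submodule.span ℝ (Set.range r) :=
    Submodule.sub_mem _ hu₀.1
      (Submodule.smul_mem _ _ (Submodule.subset_span (Set.mem_range_self i)))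
  have hproj : projPerp (r i) u = y := by
    rw [hu, proj_sub, proj_smul, proj_self (r_ne_zero hli i), smul_zero, sub_zero, hu₀y]
  -- coordinates of u
  have hcoord_ne : ∀ l, l ≠ i → dot u (rstar l) = dot y (rstar l) := by
    intro l hl
    rw [hu, dot_sub_left, dot_smul_left, hdual i l, if_neg (Ne.symm hl), mul_zero, sub_zero,
      ← hu₀y, lam_proj hdual i u₀ hl]
  have hνnn : ∀ l, l ≠ i → 0 ≤ dot y (rstar l) := fun l hl =>
    projpos_coords_nonneg hdual i hyC hl
  have hνle : ∀ l, l ≠ i → dot y (rstar l) ≤ M := by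
    intro l hl
    refine le_trans ?_ hyf
    exact Finset.single_le_sum (fun x hx => hνnn x (Finset.mem_erase.mp hx).1)
      (Finset.mem_erase.mpr ⟨hl, Finset.mem_univ l⟩)
  have hfloor1 : (⌊β / c⌋ : ℝ) ≤ β / c := Int.floor_le _
  have hfloor2 : β / c < (⌊β / c⌋ : ℝ) + 1 := Int.lt_floor_add_one _
  have hcoord_i_lb : 0 ≤ dot u (rstar i) := by
    rw [hu, dot_sub_left, dot_smul_left, hdual i i, if_pos rfl, mul_one, ← hβ, ht]
    have := mul_le_mul_of_nonneg_right hfloor1 (le_of_lt hc0)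
    rw [div_mul_cancel₀ _ (ne_of_gt hc0)] at this
    linarith
  have hcoord_i_ub : dot u (rstar i) < c := by
    rw [hu, dot_sub_left, dot_smul_left, hdual i i, if_pos rfl, mul_one, ← hβ, ht]
    have := mul_lt_mul_of_pos_right hfloor2 hc0
    rw [div_mul_cancel₀ _ (ne_of_gt hc0)] at this
    linarith
  have hcoordabs : ∀ l, |dot u (rstar l)| ≤ max M 1 := by
    intro l
    by_cases hl : l = i
    · subst hl
      rw [abs_of_nonneg hcoord_i_lb]
      exact le_trans (le_of_lt hcoord_i_ub) (le_trans hc1 (le_max_right M 1))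
    · rw [hcoord_ne l hl, abs_of_nonneg (hνnn l hl)]
      exact le_trans (hνle l hl) (le_max_left M 1)
  have hbound : ∀ a, |u a| ≤ B a := by
    intro a
    have hrep := rep_of_mem_span hdual huspan
    have hua : u a = ∑ l, dot u (rstar l) * r l a := by
      conv_lhs => rw [hrep]
      rw [Finset.sum_apply]
      exact Finset.sum_congr rfl fun l _ => rfl
    rw [hua, hB]
    calc |∑ l, dot u (rstar l) * r l a| ≤ ∑ l, |dot u (rstar l) * r l a| :=
          Finset.abs_sum_le_sum_abs _ _
      _ ≤ ∑ l, (max M 1) * |r l a| := by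
          refine Finset.sum_le_sum fun l _ => ?_
          rw [abs_mul]
          exact mul_le_mul_of_nonneg_right (hcoordabs l) (abs_nonneg _)
      _ = (max M 1) * ∑ l, |r l a| := by rw [Finset.mul_sum]
  exact ⟨u, ⟨huint, hbound⟩, hproj⟩

include hint hli in
lemma hilbert_coord_le_one {h : Fin n → ℝ}
    (hh : IsHilbertL (projPerp (r i) '' latticeOf r) (projPerp (r i) '' pos r) h)
    {l : Fin k} (hl : l ≠ i) : dot h (rstar l) ≤ 1 := by
  classical
  by_contra hgt
  push_neg at hgt
  obtain ⟨hCd, hΛd, hne, hclause⟩ := hh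
  obtain ⟨u, huΛ, hu⟩ := hΛd
  have hrlpos : r l ∈ pos r := by
    refine (mem_pos_iff hdual).mpr ⟨Submodule.subset_span (Set.mem_range_self l), fun t => ?_⟩
    rw [hdual l t]
    split <;> norm_num
  have hrlspan : r l ∈ Submodule.span ℝ (Set.range r) :=
    Submodule.subset_span (Set.mem_range_self l)
  have haC : projPerp (r i) (r l) ∈ projPerp (r i) '' pos r := ⟨r l, hrlpos, rfl⟩
  have haL : projPerp (r i) (r l) ∈ projPerp (r i) '' latticeOf r :=
    ⟨r l, ⟨hrlspan, hint l⟩, rfl⟩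
  have hal : dot (projPerp (r i) (r l)) (rstar l) = 1 := by
    rw [lam_proj hdual i (r l) hl, hdual l l, if_pos rfl]
  have hane : projPerp (r i) (r l) ≠ 0 := by
    intro h0
    rw [h0, dot_zero_left] at hal
    norm_num at hal
  set b : Fin n → ℝ := h - projPerp (r i) (r l) with hbdef
  have hbeq : b = projPerp (r i) (u - r l) := by rw [proj_sub, hu]
  have hbcoord : ∀ t, t ≠ i →
      dot b (rstar t) = dot h (rstar t) - (if l = t then 1 else 0) := by
    intro t ht
    rw [hbdef, dot_sub_left, lam_proj hdual i (r l) ht, hdual l t]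
  have hbC : b ∈ projPerp (r i) '' pos r := by
    rw [hbeq]
    refine mem_projpos_of hli hdual i (Submodule.sub_mem _ (huΛ.1) hrlspan) fun t ht => ?_
    rw [← hbeq, hbcoord t ht]
    by_cases hlt : l = t
    · subst hlt; rw [if_pos rfl]; linarith
    · rw [if_neg hlt, sub_zero]
      exact projpos_coords_nonneg hdual i hCd ht
  have hbL : b ∈ projPerp (r i) '' latticeOf r := by
    rw [hbeq]
    exact ⟨u - r l, ⟨Submodule.sub_mem _ (huΛ.1) hrlspan, huΛ.2.sub (hint l)⟩, rfl⟩
  have hbne : b ≠ 0 := by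
    intro h0
    have : h = projPerp (r i) (r l) := by
      have := sub_eq_zero.mp (hbdef ▸ h0)
      exact this
    rw [this, hal] at hgt
    norm_num at hgt
  exact hclause (projPerp (r i) (r l)) b haC hbC haL hbL hane hbne (by rw [hbdef]; abel)

include hint hli in
lemma hilbert_fsum_le {h : Fin n → ℝ}
    (hh : IsHilbertL (projPerp (r i) '' latticeOf r) (projPerp (r i) '' pos r) h) :
    ∑ l ∈ Finset.univ.erase i, dot h (rstar l) ≤ (k : ℝ) := by
  calc ∑ l ∈ Finset.univ.erase i, dot h (rstar l)
      ≤ ∑ l ∈ Finset.univ.erase i, (1 : ℝ) :=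
        Finset.sum_le_sum fun l hl =>
          hilbert_coord_le_one hint hli hdual i hh (Finset.mem_erase.mp hl).1
    _ = ((Finset.univ.erase i).card : ℝ) := by rw [Finset.sum_const, nsmul_eq_mul, mul_one]
    _ ≤ (k : ℝ) := by
        have : (Finset.univ.erase i).card ≤ k := le_trans (Finset.card_erase_le)
          (by simp)
        exact_mod_cast this

include hli in
lemma fsum_pos_of_ne {y : Fin n → ℝ} (hy : y ∈ projPerp (r i) '' pos r) (hne : y ≠ 0) :
    0 < ∑ l ∈ Finset.univ.erase i, dot y (rstar l) := by
  classical
  have hnn : ∀ l ∈ Finset.univ.erase i, 0 ≤ dot y (rstar l) := fun l hl =>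
    projpos_coords_nonneg hdual i hy (Finset.mem_erase.mp hl).1
  refine Finset.sum_pos' hnn ?_
  by_contra hall
  push_neg at hall
  refine hne (projpos_eq_zero hli hdual i hy fun l hl => ?_)
  have hmem : l ∈ Finset.univ.erase i := Finset.mem_erase.mpr ⟨hl, Finset.mem_univ l⟩
  exact le_antisymm (hall l hmem) (hnn l hmem)

include hint hli in
lemma decomp_aux (N : ℕ) : ∀ (y : Fin n → ℝ), y ∈ projPerp (r i) '' latticeOf r →
    y ∈ projPerp (r i) '' pos r →
    ((finite_bdd hint hli hdual i (∑ l ∈ Finset.univ.erase i, dot y (rstar l))).toFinset.card ≤ N) →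
    ∃ co : (Fin n → ℝ) →₀ ℕ,
      (∀ h ∈ co.support,
        IsHilbertL (projPerp (r i) '' latticeOf r) (projPerp (r i) '' pos r) h) ∧
      y = ∑ x ∈ co.support, (co x : ℝ) • x := by
  classical
  induction N with
  | zero =>
    intro y hyL hyC hcard
    by_cases hy : y = 0
    · exact ⟨0, by simp, by simp [hy]⟩
    · exfalso
      have hmem : y ∈ (finite_bdd hint hli hdual i
          (∑ l ∈ Finset.univ.erase i, dot y (rstar l))).toFinset := by
        rw [Set.Finite.mem_toFinset]
        exact ⟨hyL, hyC, le_refl _⟩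
      have := Finset.card_pos.mpr ⟨y, hmem⟩
      omega
  | succ N ih =>
    intro y hyL hyC hcard
    by_cases hy : y = 0
    · exact ⟨0, by simp, by simp [hy]⟩
    by_cases hH : IsHilbertL (projPerp (r i) '' latticeOf r) (projPerp (r i) '' pos r) y
    · refine ⟨Finsupp.single y 1, fun h hh => ?_, ?_⟩
      · rw [Finsupp.support_single_ne_zero _ one_ne_zero, Finset.mem_singleton] at hh
        subst hh; exact hH
      · rw [Finsupp.support_single_ne_zero _ one_ne_zero, Finset.sum_singleton,
          Finsupp.single_eq_same]
        simp
    · have hex : ∃ a b : Fin n → ℝ, a ∈ projPerp (r i) '' pos r ∧ b ∈ projPerp (r i) '' pos r ∧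
          a ∈ projPerp (r i) '' latticeOf r ∧ b ∈ projPerp (r i) '' latticeOf r ∧
          a ≠ 0 ∧ b ≠ 0 ∧ y = a + b := by
        unfold IsHilbertL at hH
        push_neg at hH
        obtain ⟨a, b, h1, h2, h3, h4, h5, h6, h7⟩ := hH hyC hyL hy
        exact ⟨a, b, h1, h2, h3, h4, h5, h6, h7⟩
      obtain ⟨a, b, haC, hbC, haL, hbL, ha0, hb0, hab⟩ := hex
      have hfy : ∑ l ∈ Finset.univ.erase i, dot y (rstar l)
          = (∑ l ∈ Finset.univ.erase i, dot a (rstar l))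
            + ∑ l ∈ Finset.univ.erase i, dot b (rstar l) := by
        rw [hab]; exact fsum_add i a b
      have hfa : ∑ l ∈ Finset.univ.erase i, dot a (rstar l)
          < ∑ l ∈ Finset.univ.erase i, dot y (rstar l) := by
        have := fsum_pos_of_ne hli hdual i hbC hb0
        linarith
      have hfb : ∑ l ∈ Finset.univ.erase i, dot b (rstar l)
          < ∑ l ∈ Finset.univ.erase i, dot y (rstar l) := by
        have := fsum_pos_of_ne hli hdual i haC ha0
        linarith
      have hcard' : ∀ w : Fin n → ℝ, w ∈ projPerp (r i) '' latticeOf r →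
          w ∈ projPerp (r i) '' pos r →
          (∑ l ∈ Finset.univ.erase i, dot w (rstar l))
            < ∑ l ∈ Finset.univ.erase i, dot y (rstar l) →
          (finite_bdd hint hli hdual i
            (∑ l ∈ Finset.univ.erase i, dot w (rstar l))).toFinset.card ≤ N := by
        intro w hwL hwC hfw
        have hss : (finite_bdd hint hli hdual i
            (∑ l ∈ Finset.univ.erase i, dot w (rstar l))).toFinset
            ⊂ (finite_bdd hint hli hdual i
              (∑ l ∈ Finset.univ.erase i, dot y (rstar l))).toFinset := by
          constructor
          · intro x hx
            rw [Set.Finite.mem_toFinset] at hx ⊢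
            exact ⟨hx.1, hx.2.1, le_trans hx.2.2 (le_of_lt hfw)⟩
          · intro hsub
            have hymem : y ∈ (finite_bdd hint hli hdual i
                (∑ l ∈ Finset.univ.erase i, dot y (rstar l))).toFinset := by
              rw [Set.Finite.mem_toFinset]; exact ⟨hyL, hyC, le_refl _⟩
            have := hsub hymem
            rw [Set.Finite.mem_toFinset] at this
            linarith [this.2.2]
        have := Finset.card_lt_card hss
        omega
      obtain ⟨ca, hcaH, hcas⟩ := ih a haL haC (hcard' a haL haC hfa)
      obtain ⟨cb, hcbH, hcbs⟩ := ih b hbL hbC (hcard' b hbL hbC hfb)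
      refine ⟨ca + cb, fun h hh => ?_, ?_⟩
      · rcases Finset.mem_union.mp (Finsupp.support_add hh) with h' | h'
        exacts [hcaH h h', hcbH h h']
      · have hsum : ∑ x ∈ (ca + cb).support, ((ca + cb) x : ℝ) • x
            = (ca + cb).sum fun h m => (m : ℝ) • h := rfl
        rw [hsum, Finsupp.sum_add_index' (fun h => by simp) (fun h m1 m2 => by
          push_cast; rw [add_smul])]
        have h1 : ca.sum (fun h m => (m : ℝ) • h) = ∑ x ∈ ca.support, (ca x : ℝ) • x := rfl
        have h2 : cb.sum (fun h m => (m : ℝ) • h) = ∑ x ∈ cb.support, (cb x : ℝ) • x := rfl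
        rw [h1, h2, ← hcas, ← hcbs, hab]

include hint hli in
lemma exists_rep {y : Fin n → ℝ} (hyL : y ∈ projPerp (r i) '' latticeOf r)
    (hyC : y ∈ projPerp (r i) '' pos r) :
    ∃ q : ℕ, q ≤ (finite_bdd hint hli hdual i (k : ℝ)).toFinset.card ∧
      q ∈ {m : ℕ | ∃ h : Fin m → (Fin n → ℝ), ∃ c : Fin m → ℕ,
        (∀ t, IsHilbertL (projPerp (r i) '' latticeOf r) (projPerp (r i) '' pos r) (h t)) ∧
        y = ∑ t, (c t : ℝ) • h t} := by
  classical
  obtain ⟨co, hcoH, hcos⟩ := decomp_aux hint hli hdual i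
    ((finite_bdd hint hli hdual i (∑ l ∈ Finset.univ.erase i, dot y (rstar l))).toFinset.card)
    y hyL hyC (le_refl _)
  have hsub : co.support ⊆ (finite_bdd hint hli hdual i (k : ℝ)).toFinset := by
    intro h hh
    rw [Set.Finite.mem_toFinset]
    have hH := hcoH h hh
    exact ⟨hH.2.1, hH.1, hilbert_fsum_le hint hli hdual i hH⟩
  refine ⟨co.support.card, Finset.card_le_card hsub, ?_⟩
  set e := co.support.equivFin with he
  refine ⟨fun t => ((e.symm t : { x // x ∈ co.support }) : Fin n → ℝ),
    fun t => co ((e.symm t : { x // x ∈ co.support }) : Fin n → ℝ), fun t => ?_, ?_⟩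
  · exact hcoH _ (e.symm t).2
  · rw [hcos]
    have h1 : ∑ t : Fin co.support.card,
        (co ((e.symm t : { x // x ∈ co.support }) : Fin n → ℝ) : ℝ)
          • ((e.symm t : { x // x ∈ co.support }) : Fin n → ℝ)
        = ∑ x : { x // x ∈ co.support }, (co (x : Fin n → ℝ) : ℝ) • (x : Fin n → ℝ) :=
      Equiv.sum_comp e.symm (fun x : { x // x ∈ co.support } =>
        (co (x : Fin n → ℝ) : ℝ) • (x : Fin n → ℝ))
    rw [h1, Finset.sum_coe_sort co.support (fun x => (co x : ℝ) • x)]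

include hint hli in
lemma bddAbove_icr :
    BddAbove {m : ℕ | ∃ z ∈ projPerp (r i) '' pos r, z ∈ projPerp (r i) '' latticeOf r ∧
      m = sInf {q : ℕ | ∃ h : Fin q → (Fin n → ℝ), ∃ c : Fin q → ℕ,
        (∀ t, IsHilbertL (projPerp (r i) '' latticeOf r) (projPerp (r i) '' pos r) (h t)) ∧
        z = ∑ t, (c t : ℝ) • h t}} := by
  refine ⟨(finite_bdd hint hli hdual i (k : ℝ)).toFinset.card, fun m hm => ?_⟩
  obtain ⟨z, hzC, hzL, rfl⟩ := hm
  obtain ⟨q, hq1, hq2⟩ := exists_rep hint hli hdual i hzL hzC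
  exact le_trans (Nat.sInf_le hq2) hq1

omit hdual in
lemma ray_ge {c : ℝ} (hc0 : 0 < c)
    (hgen : ∀ t : ℝ, IsIntegral (t • r i) ↔ ∃ z : ℤ, t = (z : ℝ) * c)
    {a : Fin n → ℝ} {t : ℝ} (hat : a = t • r i) (haint : IsIntegral a) (ha0 : a ≠ 0)
    (ht : 0 ≤ t) : c ≤ t := by
  obtain ⟨z, hz⟩ := (hgen t).mp (hat ▸ haint)
  have hz1 : 1 ≤ z := by
    by_contra hzlt
    push_neg at hzlt
    have hz0 : z ≤ 0 := by omega
    have : t ≤ 0 := by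
      rw [hz]
      have : (z : ℝ) ≤ 0 := by exact_mod_cast hz0
      nlinarith
    have ht0 : t = 0 := le_antisymm this ht
    exact ha0 (by rw [hat, ht0, zero_smul])
  have : (1 : ℝ) ≤ (z : ℝ) := by exact_mod_cast hz1
  rw [hz]
  nlinarith

lemma ray_rep {a : Fin n → ℝ} (ha : a ∈ Submodule.span ℝ (Set.range r))
    (h0 : ∀ l, l ≠ i → dot a (rstar l) = 0) : a = dot a (rstar i) • r i := by
  classical
  conv_lhs => rw [rep_of_mem_span hdual ha]
  rw [← Finset.add_sum_erase _ _ (Finset.mem_univ i)]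
  rw [Finset.sum_eq_zero (fun l hl => by
    rw [h0 l (Finset.mem_erase.mp hl).1, zero_smul]), add_zero]

include hint hli in
lemma rho_hilbert {c : ℝ} (hc0 : 0 < c)
    (hgen : ∀ t : ℝ, IsIntegral (t • r i) ↔ ∃ z : ℤ, t = (z : ℝ) * c) :
    IsHilbertL (intLattice n) (pos r) (c • r i) := by
  classical
  have hrine := r_ne_zero hli i
  have hspanri : r i ∈ Submodule.span ℝ (Set.range r) :=
    Submodule.subset_span (Set.mem_range_self i)
  have hcoords : ∀ l, dot (c • r i) (rstar l) = c * (if i = l then 1 else 0) := by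
    intro l; rw [dot_smul_left, hdual i l]
  refine ⟨?_, ?_, ?_, ?_⟩
  · refine (mem_pos_iff hdual).mpr ⟨Submodule.smul_mem _ _ hspanri, fun l => ?_⟩
    rw [hcoords l]
    split <;> nlinarith
  · exact (hgen c).mpr ⟨1, by rw [Int.cast_one, one_mul]⟩
  · exact smul_ne_zero (ne_of_gt hc0) hrine
  · intro a b haC hbC haΛ hbΛ ha0 hb0 heq
    have hzero : ∀ l, l ≠ i → dot a (rstar l) = 0 ∧ dot b (rstar l) = 0 := by
      intro l hl
      have hsum : dot a (rstar l) + dot b (rstar l) = 0 := by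
        rw [← dot_add_left, ← heq, hcoords l, if_neg (Ne.symm hl), mul_zero]
      have h1 := ((mem_pos_iff hdual).mp haC).2 l
      have h2 := ((mem_pos_iff hdual).mp hbC).2 l
      constructor <;> linarith
    have haray : a = dot a (rstar i) • r i :=
      ray_rep hdual i (pos_subset_span haC) (fun l hl => (hzero l hl).1)
    have hbray : b = dot b (rstar i) • r i :=
      ray_rep hdual i (pos_subset_span hbC) (fun l hl => (hzero l hl).2)
    have hta : c ≤ dot a (rstar i) :=
      ray_ge i hc0 hgen haray haΛ ha0 (((mem_pos_iff hdual).mp haC).2 i)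
    have htb : c ≤ dot b (rstar i) :=
      ray_ge i hc0 hgen hbray hbΛ hb0 (((mem_pos_iff hdual).mp hbC).2 i)
    have hsum : dot a (rstar i) + dot b (rstar i) = c := by
      rw [← dot_add_left, ← heq, hcoords i, if_pos rfl, mul_one]
    linarith

include hint hli in
lemma exists_min_lift {c : ℝ} (hc0 : 0 < c) (hc1 : c ≤ 1)
    (hgen : ∀ t : ℝ, IsIntegral (t • r i) ↔ ∃ z : ℤ, t = (z : ℝ) * c)
    {h : Fin n → ℝ}
    (hh : IsHilbertL (projPerp (r i) '' latticeOf r) (projPerp (r i) '' pos r) h) :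
    ∃ g : Fin n → ℝ, g ∈ pos r ∧ IsIntegral g ∧ projPerp (r i) g = h ∧
      dot g (rstar i) < c ∧ IsHilbertL (intLattice n) (pos r) g := by
  classical
  obtain ⟨hCd, hΛd, hne, hclause⟩ := hh
  obtain ⟨u, huΛ, hu⟩ := hΛd
  have hrine := r_ne_zero hli i
  have hspanri : r i ∈ Submodule.span ℝ (Set.range r) :=
    Submodule.subset_span (Set.mem_range_self i)
  set β : ℝ := dot u (rstar i) with hβ
  set g : Fin n → ℝ := u - ((⌊β / c⌋ : ℝ) * c) • r i with hg
  have hgint : IsIntegral g := huΛ.2.sub ((hgen _).mpr ⟨⌊β / c⌋, rfl⟩)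
  have hgspan : g ∈ Submodule.span ℝ (Set.range r) :=
    Submodule.sub_mem _ huΛ.1 (Submodule.smul_mem _ _ hspanri)
  have hgproj : projPerp (r i) g = h := by
    rw [hg, proj_sub, proj_smul, proj_self hrine, smul_zero, sub_zero, hu]
  have hgcoord_ne : ∀ l, l ≠ i → dot g (rstar l) = dot h (rstar l) := by
    intro l hl
    rw [hg, dot_sub_left, dot_smul_left, hdual i l, if_neg (Ne.symm hl), mul_zero, sub_zero,
      ← hu, lam_proj hdual i u hl]
  have hfloor1 : (⌊β / c⌋ : ℝ) ≤ β / c := Int.floor_le _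
  have hfloor2 : β / c < (⌊β / c⌋ : ℝ) + 1 := Int.lt_floor_add_one _
  have hgi : dot g (rstar i) = β - (⌊β / c⌋ : ℝ) * c := by
    rw [hg, dot_sub_left, dot_smul_left, hdual i i, if_pos rfl, mul_one, ← hβ]
  have hgi_lb : 0 ≤ dot g (rstar i) := by
    rw [hgi]
    have := mul_le_mul_of_nonneg_right hfloor1 (le_of_lt hc0)
    rw [div_mul_cancel₀ _ (ne_of_gt hc0)] at this
    linarith
  have hgi_ub : dot g (rstar i) < c := by
    rw [hgi]
    have := mul_lt_mul_of_pos_right hfloor2 hc0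
    rw [div_mul_cancel₀ _ (ne_of_gt hc0)] at this
    linarith
  have hgpos : g ∈ pos r := by
    refine (mem_pos_iff hdual).mpr ⟨hgspan, fun l => ?_⟩
    by_cases hl : l = i
    · subst hl; exact hgi_lb
    · rw [hgcoord_ne l hl]
      exact projpos_coords_nonneg hdual i hCd hl
  -- minimality
  have hmin : ∀ g' : Fin n → ℝ, g' ∈ pos r → IsIntegral g' → projPerp (r i) g' = h →
      dot g (rstar i) ≤ dot g' (rstar i) := by
    intro g' hg'C hg'int hg'proj
    have hdiff : projPerp (r i) (g' - g) = 0 := by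
      rw [proj_sub, hg'proj, hgproj, sub_self]
    have hray := (proj_eq_zero_iff (r i) (g' - g)).mp hdiff
    set t : ℝ := dot (g' - g) (r i) / dot (r i) (r i) with htdef
    obtain ⟨z, hz⟩ := (hgen t).mp (hray ▸ (hg'int.sub hgint))
    have hg'i : dot g' (rstar i) = dot g (rstar i) + t := by
      have : dot (g' - g) (rstar i) = t := by
        rw [hray, dot_smul_left, hdual i i, if_pos rfl, mul_one]
      rw [dot_sub_left] at this
      linarith
    by_cases hz0 : 0 ≤ z
    · have : (0 : ℝ) ≤ t := by
        rw [hz]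
        have : (0 : ℝ) ≤ (z : ℝ) := by exact_mod_cast hz0
        nlinarith
      linarith
    · exfalso
      push_neg at hz0
      have hzle : (z : ℝ) ≤ -1 := by exact_mod_cast (by omega : z ≤ -1)
      have htle : t ≤ -c := by rw [hz]; nlinarith
      have := ((mem_pos_iff hdual).mp hg'C).2 i
      rw [hg'i] at this
      linarith
  refine ⟨g, hgpos, hgint, hgproj, hgi_ub, ?_, ?_, ?_, ?_⟩
  · exact hgpos
  · exact hgint
  · intro h0
    exact hne (by rw [← hgproj, h0, proj_zero])
  · intro a b haC hbC haΛ hbΛ ha0 hb0 heq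
    have haspan : a ∈ Submodule.span ℝ (Set.range r) := pos_subset_span haC
    have hbspan : b ∈ Submodule.span ℝ (Set.range r) := pos_subset_span hbC
    have hpasum : projPerp (r i) a + projPerp (r i) b = h := by
      rw [← proj_add, ← heq, hgproj]
    by_cases hpa : projPerp (r i) a = 0
    · -- a is on the ray, b is a smaller lift
      have haray := (proj_eq_zero_iff (r i) a).mp hpa
      set ta : ℝ := dot a (r i) / dot (r i) (r i) with htadef
      have htai : dot a (rstar i) = ta := by
        rw [haray, dot_smul_left, hdual i i, if_pos rfl, mul_one]
      have hta_nn : 0 ≤ ta := htai ▸ ((mem_pos_iff hdual).mp haC).2 i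
      have htac : c ≤ ta := ray_ge i hc0 hgen haray haΛ ha0 hta_nn
      have hbproj : projPerp (r i) b = h := by
        rw [← hpasum, hpa, zero_add]
      have hbmin := hmin b hbC hbΛ hbproj
      have hbi : dot b (rstar i) = dot g (rstar i) - ta := by
        have : dot g (rstar i) = dot a (rstar i) + dot b (rstar i) := by
          rw [heq, dot_add_left]
        rw [htai] at this
        linarith
      rw [hbi] at hbmin
      linarith
    · by_cases hpb : projPerp (r i) b = 0
      · have hbray := (proj_eq_zero_iff (r i) b).mp hpb
        set tb : ℝ := dot b (r i) / dot (r i) (r i) with htbdef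
        have htbi : dot b (rstar i) = tb := by
          rw [hbray, dot_smul_left, hdual i i, if_pos rfl, mul_one]
        have htb_nn : 0 ≤ tb := htbi ▸ ((mem_pos_iff hdual).mp hbC).2 i
        have htbc : c ≤ tb := ray_ge i hc0 hgen hbray hbΛ hb0 htb_nn
        have haproj : projPerp (r i) a = h := by
          rw [← hpasum, hpb, add_zero]
        have hamin := hmin a haC haΛ haproj
        have hai : dot a (rstar i) = dot g (rstar i) - tb := by
          have : dot g (rstar i) = dot a (rstar i) + dot b (rstar i) := by
            rw [heq, dot_add_left]
          rw [htbi] at this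
          linarith
        rw [hai] at hamin
        linarith
      · exact hclause (projPerp (r i) a) (projPerp (r i) b)
          ⟨a, haC, rfl⟩ ⟨b, hbC, rfl⟩
          ⟨a, ⟨haspan, haΛ⟩, rfl⟩ ⟨b, ⟨hbspan, hbΛ⟩, rfl⟩
          hpa hpb hpasum.symm

include hint hli in
lemma key_lemma (j : Fin k) (hij : i ≠ j)
    (hmem : rstar i - rstar j ∈ dualLattice (latticeOf r))
    {z : Fin n → ℝ} (hz : z ∈ pos r) (hzint : z ∈ intLattice n)
    (hle : dot z (rstar j) ≤ dot z (rstar i)) :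
    sInf {q : ℕ | ∃ h : Fin q → (Fin n → ℝ), ∃ c : Fin q → ℕ,
      (∀ t, IsHilbertL (intLattice n) (pos r) (h t)) ∧ z = ∑ t, (c t : ℝ) • h t}
    ≤ ICRL (projPerp (r i) '' latticeOf r) (projPerp (r i) '' pos r) + 1 := by
  classical
  obtain ⟨c, hc0, hc1, hgen⟩ := exists_gen (r_ne_zero hli i) (hint i)
  have hzspan : z ∈ Submodule.span ℝ (Set.range r) := pos_subset_span hz
  have hzΛ : z ∈ latticeOf r := ⟨hzspan, hzint⟩
  set y : Fin n → ℝ := projPerp (r i) z with hy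
  have hyC : y ∈ projPerp (r i) '' pos r := ⟨z, hz, rfl⟩
  have hyL : y ∈ projPerp (r i) '' latticeOf r := ⟨z, hzΛ, rfl⟩
  set R' : Set ℕ := {q : ℕ | ∃ h : Fin q → (Fin n → ℝ), ∃ c : Fin q → ℕ,
    (∀ t, IsHilbertL (projPerp (r i) '' latticeOf r) (projPerp (r i) '' pos r) (h t)) ∧
    y = ∑ t, (c t : ℝ) • h t} with hR'
  have hR'ne : R'.Nonempty := by
    obtain ⟨q, _, hq⟩ := exists_rep hint hli hdual i hyL hyC
    exact ⟨q, hq⟩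
  have hpS : sInf R' ∈ {m : ℕ | ∃ z' ∈ projPerp (r i) '' pos r,
      z' ∈ projPerp (r i) '' latticeOf r ∧
      m = sInf {q : ℕ | ∃ h : Fin q → (Fin n → ℝ), ∃ c : Fin q → ℕ,
        (∀ t, IsHilbertL (projPerp (r i) '' latticeOf r) (projPerp (r i) '' pos r) (h t)) ∧
        z' = ∑ t, (c t : ℝ) • h t}} := ⟨y, hyC, hyL, rfl⟩
  have hple : sInf R' ≤ ICRL (projPerp (r i) '' latticeOf r) (projPerp (r i) '' pos r) :=
    le_csSup (bddAbove_icr hint hli hdual i) hpS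
  obtain ⟨H, Cc, hHilb, hrep⟩ := Nat.sInf_mem hR'ne
  choose g hgpos hgint hgproj hgi_ub hgHilb using fun t =>
    exists_min_lift hint hli hdual i hc0 hc1 hgen (hHilb t)
  set G : Fin n → ℝ := ∑ t, (Cc t : ℝ) • g t with hG
  set w : Fin n → ℝ := z - G with hw
  have hGproj : projPerp (r i) G = y := by
    rw [hG, proj_sum]
    rw [hrep]
    exact Finset.sum_congr rfl fun t _ => by rw [proj_smul, hgproj t]
  have hwproj : projPerp (r i) w = 0 := by
    rw [hw, proj_sub, hGproj, hy, sub_self]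
  have hwray := (proj_eq_zero_iff (r i) w).mp hwproj
  set tw : ℝ := dot w (r i) / dot (r i) (r i) with htw
  have hwint : IsIntegral w :=
    hzint.sub (IsIntegral.sum Finset.univ _ (fun t _ => (hgint t).nsmul (Cc t)))
  obtain ⟨zw, hzw⟩ := (hgen tw).mp (hwray ▸ hwint)
  have hGcoord : ∀ l, dot G (rstar l) = ∑ t, (Cc t : ℝ) * dot (g t) (rstar l) := by
    intro l
    rw [hG, dot_sum_left]
    exact Finset.sum_congr rfl fun t _ => dot_smul_left _ _ _
  have hwcoord : ∀ l, dot w (rstar l) = tw * (if i = l then 1 else 0) := by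
    intro l
    rw [hwray, dot_smul_left, hdual i l]
  have hzcoord : ∀ l, dot z (rstar l)
      = (∑ t, (Cc t : ℝ) * dot (g t) (rstar l)) + tw * (if i = l then 1 else 0) := by
    intro l
    have : dot z (rstar l) = dot G (rstar l) + dot w (rstar l) := by
      rw [hw, dot_sub_left]; ring
    rw [this, hGcoord l, hwcoord l]
  have hjcoord : dot z (rstar j) = ∑ t, (Cc t : ℝ) * dot (g t) (rstar j) := by
    have := hzcoord j
    rw [if_neg hij, mul_zero, add_zero] at this
    exact this
  have hicoord : dot z (rstar i) = (∑ t, (Cc t : ℝ) * dot (g t) (rstar i)) + tw := by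
    have := hzcoord i
    rw [if_pos rfl, mul_one] at this
    exact this
  have hdualz : ∀ u, u ∈ latticeOf r → ∃ m : ℤ, dot u (rstar i) - dot u (rstar j) = m := by
    intro u hu
    obtain ⟨m, hm⟩ := hmem.2 u hu
    exact ⟨m, by rw [← hm, dot_sub_right]⟩
  have hterm : ∀ t, 0 ≤ dot (g t) (rstar j) - dot (g t) (rstar i) := by
    intro t
    have hgtΛ : g t ∈ latticeOf r := ⟨pos_subset_span (hgpos t), hgint t⟩
    obtain ⟨m, hm⟩ := hdualz (g t) hgtΛ
    have hjnn : 0 ≤ dot (g t) (rstar j) := ((mem_pos_iff hdual).mp (hgpos t)).2 j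
    have hlt : (m : ℝ) < 1 := by
      rw [← hm]
      have := hgi_ub t
      linarith
    have hm0 : m ≤ 0 := by
      by_contra hcon
      push_neg at hcon
      have : (1 : ℝ) ≤ (m : ℝ) := by exact_mod_cast hcon
      linarith
    have : (m : ℝ) ≤ 0 := by exact_mod_cast hm0
    linarith
  have htw_nn : 0 ≤ tw := by
    have hsum_nn : 0 ≤ ∑ t, (Cc t : ℝ) * (dot (g t) (rstar j) - dot (g t) (rstar i)) :=
      Finset.sum_nonneg fun t _ =>
        mul_nonneg (Nat.cast_nonneg _) (hterm t)
    have hexp : tw = (dot z (rstar i) - dot z (rstar j))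
        + ∑ t, (Cc t : ℝ) * (dot (g t) (rstar j) - dot (g t) (rstar i)) := by
      rw [hicoord, hjcoord]
      simp only [mul_sub]
      rw [Finset.sum_sub_distrib]
      ring
    rw [hexp]
    have : 0 ≤ dot z (rstar i) - dot z (rstar j) := by linarith
    linarith
  have hzw_nn : 0 ≤ zw := by
    by_contra hcon
    push_neg at hcon
    have h1 : (zw : ℝ) ≤ -1 := by exact_mod_cast (by omega : zw ≤ -1)
    rw [hzw] at htw_nn
    nlinarith
  -- build the representation of z with sInf R' + 1 Hilbert elements
  have hfin : (sInf R' + 1) ∈ {q : ℕ | ∃ h : Fin q → (Fin n → ℝ), ∃ c : Fin q → ℕ,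
      (∀ t, IsHilbertL (intLattice n) (pos r) (h t)) ∧ z = ∑ t, (c t : ℝ) • h t} := by
    refine ⟨Fin.snoc g (c • r i), Fin.snoc Cc zw.toNat, fun t => ?_, ?_⟩
    · refine Fin.lastCases ?_ (fun t' => ?_) t
      · rw [Fin.snoc_last]
        exact rho_hilbert hint hli hdual i hc0 hgen
      · rw [Fin.snoc_castSucc]
        exact hgHilb t'
    · rw [Fin.sum_univ_castSucc]
      simp only [Fin.snoc_castSucc, Fin.snoc_last]
      have h2 : ((zw.toNat : ℕ) : ℝ) • (c • r i) = tw • r i := by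
        rw [smul_smul, hzw]
        have hcast : ((zw.toNat : ℕ) : ℝ) = (zw : ℝ) := by
          exact_mod_cast Int.toNat_of_nonneg hzw_nn
        rw [hcast]
      rw [h2, ← hG]
      have h3 : z - G = tw • r i := by rw [← hw]; exact hwray
      rw [← h3]
      abel
  exact le_trans (Nat.sInf_le hfin) (Nat.add_le_add_right hple 1)

end Main

/-- if `(r^i)* − (r^j)* ∈ (L ∩ ℤ^n)*`, then `ICR(pos r)` is at most one more
than the maximum of the Carathéodory ranks of the two projected cones, taken with respect
to the projected lattices. -/
theorem stmt_8 {n k : ℕ} (r : Fin k → (Fin n → ℝ))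
    (hint : ∀ i, IsIntegral (r i)) (hli : LinearIndependent ℝ r)
    (rstar : Fin k → (Fin n → ℝ))
    (hspan : ∀ j, rstar j ∈ Submodule.span ℝ (Set.range r))
    (hdual : ∀ l j, dot (r l) (rstar j) = if l = j then 1 else 0)
    (i j : Fin k) (hij : i ≠ j)
    (hmem : rstar i - rstar j ∈ dualLattice (latticeOf r)) :
    ICR (pos r) ≤
      max (ICRL (projPerp (r i) '' latticeOf r) (projPerp (r i) '' pos r))
          (ICRL (projPerp (r j) '' latticeOf r) (projPerp (r j) '' pos r)) + 1 := by
  classical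
  unfold ICR ICRL
  apply csSup_le'
  rintro m ⟨z, hzC, hzΛ, rfl⟩
  rcases le_total (dot z (rstar j)) (dot z (rstar i)) with hle | hle
  · exact le_trans (key_lemma hint hli hdual i j hij hmem hzC hzΛ hle)
      (Nat.add_le_add_right (le_max_left _ _) 1)
  · have hmem' : rstar j - rstar i ∈ dualLattice (latticeOf r) := by
      refine ⟨?_, ?_⟩
      · rw [show rstar j - rstar i = -(rstar i - rstar j) from (neg_sub _ _).symm]
        exact Submodule.neg_mem _ hmem.1
      · intro u hu
        obtain ⟨m', hm'⟩ := hmem.2 u hu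
        refine ⟨-m', ?_⟩
        rw [dot_sub_right] at hm' ⊢
        push_cast
        linarith
    exact le_trans (key_lemma hint hli hdual j i hij.symm hmem' hzC hzΛ hle)
      (Nat.add_le_add_right (le_max_right _ _) 1)

end ICRPaper
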